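/- Under assumptions (V1)-(V3) and for discrete densities y_i ∈ (0, R] solving the Lagrangian ODE system with velocity total variation bound TV[v(ρ̌ⁿ(τ))] ≤ C_δ for τ ≥ δ, the discrete Lagrangian density ρ̌ⁿ(t,z) = Σ y_i(t)𝟙_{[iℓ,(i+1)ℓ)}(z) satisfies the L¹ time continuity estimate ∫_0^L |ρ̌ⁿ(t,z) − ρ̌ⁿ(s,z)| dz ≤ R²(C_δ + v(0) − v(R))|t − s| for all t, s ≥ δ. -/

import Mathlib

set_option maxHeartbeats 1000000

open MeasureTheory

/-- `L¹` time continuity of the discrete Lagrangian density away from `t = 0`. -/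
theorem lagrangian_density_time_continuity
    (N : ℕ) (hN : 1 ≤ N) (v : ℝ → ℝ) (ℓ L R δ C : ℝ)
    (hℓ : 0 < ℓ) (hL : L = N * ℓ) (hR : 0 < R) (hδ : 0 < δ)
    (hv_smooth : ContDiffOn ℝ 1 v (Set.Ici 0))
    (hv_anti : StrictAntiOn v (Set.Ici 0))
    (hV3 : AntitoneOn (fun ρ => ρ * deriv v ρ) (Set.Ici (0:ℝ)))
    (y : ℕ → ℝ → ℝ)
    (hbound : ∀ i < N, ∀ t ≥ (0:ℝ), y i t ∈ Set.Ioc (0:ℝ) R)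
    (hODE_last : ∀ t ≥ (0:ℝ),
      HasDerivAt (y (N - 1))
        (-(y (N - 1) t) ^ 2 / ℓ * (v 0 - v (y (N - 1) t))) t)
    (hODE : ∀ i, i + 1 < N → ∀ t ≥ (0:ℝ),
      HasDerivAt (y i)
        (-(y i t) ^ 2 / ℓ * (v (y (i + 1) t) - v (y i t))) t)
    (hTV : ∀ τ ≥ δ,
      ∑ i ∈ Finset.range (N - 1), |v (y (i + 1) τ) - v (y i τ)| ≤ C)
    (ρcheck : ℝ → ℝ → ℝ)
    (hρcheck : ∀ t z, ρcheck t z = ∑ i ∈ Finset.range N,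
      Set.indicator (Set.Ico ((i : ℝ) * ℓ) (((i : ℝ) + 1) * ℓ))
        (fun _ => y i t) z) :
    ∀ t s : ℝ, δ ≤ t → δ ≤ s →
      ∫ z in (0:ℝ)..L, |ρcheck t z - ρcheck s z|
        ≤ R ^ 2 * (C + (v 0 - v R)) * |t - s| := by
  intro t s ht hs
  set K : ℝ := R ^ 2 / ℓ * (C + (v 0 - v R)) with hK
  -- auxiliary: Y j τ = y j τ for j < N, 0 otherwise
  set Y : ℕ → ℝ → ℝ := fun j τ => if j < N then y j τ else 0 with hY
  set d : ℕ → ℝ → ℝ := fun i τ => -(y i τ) ^ 2 / ℓ * (v (Y (i+1) τ) - v (y i τ)) with hd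
  have hderiv : ∀ i < N, ∀ τ : ℝ, 0 ≤ τ → HasDerivAt (y i) (d i τ) τ := by
    intro i hi τ hτ
    by_cases h : i + 1 < N
    · have : Y (i+1) τ = y (i+1) τ := if_pos h
      rw [hd]; simp only [this]
      exact hODE i h τ hτ
    · have hiN : i = N - 1 := by omega
      have : Y (i+1) τ = 0 := by
        have : ¬ (i + 1 < N) := h
        simp [hY, this]
      rw [hd]; simp only [this]
      rw [hiN]
      exact hODE_last τ hτ
  -- sign function
  set ε : ℕ → ℝ := fun i => if 0 ≤ y i t - y i s then 1 else -1 with hε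
  have hεabs : ∀ i, |ε i| = 1 := by
    intro i
    simp only [hε]
    split_ifs <;> simp
  have hεmul : ∀ i, ε i * (y i t - y i s) = |y i t - y i s| := by
    intro i
    by_cases h : 0 ≤ y i t - y i s
    · simp only [hε, if_pos h]; rw [abs_of_nonneg h]; ring
    · simp only [hε, if_neg h]; rw [abs_of_neg (lt_of_not_ge h)]; ring
  set g : ℝ → ℝ := fun τ => ∑ i ∈ Finset.range N, ε i * y i τ with hg
  set G : ℝ → ℝ := fun τ => ∑ i ∈ Finset.range N, ε i * d i τ with hG
  have hgderiv : ∀ τ ∈ Set.Ici δ, HasDerivWithinAt g (G τ) (Set.Ici δ) τ := by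
    intro τ hτ
    have hτ0 : (0:ℝ) ≤ τ := le_trans hδ.le hτ
    have : HasDerivAt g (G τ) τ := by
      apply HasDerivAt.fun_sum
      intro i hi
      exact (hderiv i (Finset.mem_range.mp hi) τ hτ0).const_mul (ε i)
    exact this.hasDerivWithinAt
  have hbnd : ∀ τ ∈ Set.Ici δ, ‖G τ‖ ≤ K := by
    intro τ hτ
    have hτ0 : (0:ℝ) ≤ τ := le_trans hδ.le hτ
    have h1 : ‖G τ‖ ≤ ∑ i ∈ Finset.range N, |d i τ| := by
      rw [Real.norm_eq_abs]
      refine le_trans (Finset.abs_sum_le_sum_abs _ _) ?_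
      apply Finset.sum_le_sum
      intro i _
      rw [abs_mul, hεabs, one_mul]
    refine le_trans h1 ?_
    have hdi : ∀ i < N, |d i τ| ≤ R^2/ℓ * |v (Y (i+1) τ) - v (y i τ)| := by
      intro i hi
      have hyi := hbound i hi τ hτ0
      rw [hd, abs_mul, abs_div]
      have h2 : |(-(y i τ) ^ 2)| ≤ R ^ 2 := by
        rw [abs_neg, abs_pow]
        apply pow_le_pow_left₀ (abs_nonneg _) _
        rw [abs_of_pos hyi.1]
        exact hyi.2
      rw [abs_of_pos hℓ]
      gcongr
    obtain ⟨M, hM⟩ : ∃ M, N = M + 1 := ⟨N - 1, by omega⟩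
    have hM1 : N - 1 = M := by omega
    rw [hM, Finset.sum_range_succ]
    have hsum1 : ∑ i ∈ Finset.range M, |d i τ| ≤ R^2/ℓ * C := by
      have : ∑ i ∈ Finset.range M, |d i τ|
          ≤ ∑ i ∈ Finset.range M, R^2/ℓ * |v (y (i+1) τ) - v (y i τ)| := by
        apply Finset.sum_le_sum
        intro i hi
        have hiM : i < M := Finset.mem_range.mp hi
        have hilt : i < N := by omega
        have hi1 : i + 1 < N := by omega
        have hYi : Y (i+1) τ = y (i+1) τ := if_pos hi1
        have := hdi i hilt
        rw [hYi] at this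
        exact this
      refine le_trans this ?_
      rw [← Finset.mul_sum]
      have hC := hTV τ hτ
      rw [hM1] at hC
      have hRl : (0:ℝ) ≤ R^2/ℓ := by positivity
      exact mul_le_mul_of_nonneg_left hC hRl
    have hlast : |d M τ| ≤ R^2/ℓ * (v 0 - v R) := by
      have hMlt : M < N := by omega
      have hYM : Y (M+1) τ = 0 := by
        have : ¬ (M + 1 < N) := by omega
        simp [hY, this]
      have := hdi M hMlt
      rw [hYM] at this
      refine le_trans this ?_
      have hyM := hbound M hMlt τ hτ0
      have hanti := hv_anti.antitoneOn
      have hv1 : v (y M τ) ≤ v 0 := le_of_lt (hv_anti (Set.mem_Ici.mpr le_rfl)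
        (Set.mem_Ici.mpr hyM.1.le) hyM.1)
      have hv2 : v R ≤ v (y M τ) := hanti (Set.mem_Ici.mpr hyM.1.le)
        (Set.mem_Ici.mpr hR.le) hyM.2
      have habs : |v 0 - v (y M τ)| ≤ v 0 - v R := by
        rw [abs_of_nonneg (by linarith)]; linarith
      have hRl : (0:ℝ) ≤ R^2/ℓ := by positivity
      exact mul_le_mul_of_nonneg_left habs hRl
    rw [hK]
    calc ∑ i ∈ Finset.range M, |d i τ| + |d M τ|
        ≤ R^2/ℓ * C + R^2/ℓ * (v 0 - v R) := add_le_add hsum1 hlast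
      _ = R ^ 2 / ℓ * (C + (v 0 - v R)) := by ring
  have key : ∑ i ∈ Finset.range N, |y i t - y i s| ≤ K * |t - s| := by
    have := Convex.norm_image_sub_le_of_norm_hasDerivWithin_le hgderiv hbnd
      (convex_Ici δ) (Set.mem_Ici.mpr hs) (Set.mem_Ici.mpr ht)
    rw [Real.norm_eq_abs, Real.norm_eq_abs] at this
    have hgts : g t - g s = ∑ i ∈ Finset.range N, |y i t - y i s| := by
      rw [hg]
      rw [← Finset.sum_sub_distrib]
      apply Finset.sum_congr rfl
      intro i _
      rw [← mul_sub, hεmul]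
    calc ∑ i ∈ Finset.range N, |y i t - y i s| = g t - g s := hgts.symm
      _ ≤ |g t - g s| := le_abs_self _
      _ ≤ K * |t - s| := this
  -- now the integral part
  have hL0 : (0:ℝ) < L := by
    rw [hL]; positivity
  have hdiff : ∀ z, ρcheck t z - ρcheck s z = ∑ i ∈ Finset.range N,
      Set.indicator (Set.Ico ((i : ℝ) * ℓ) (((i : ℝ) + 1) * ℓ))
        (fun _ => y i t - y i s) z := by
    intro z
    rw [hρcheck, hρcheck, ← Finset.sum_sub_distrib]
    apply Finset.sum_congr rfl
    intro i _
    by_cases h : z ∈ Set.Ico ((i : ℝ) * ℓ) (((i : ℝ) + 1) * ℓ)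
    · simp [Set.indicator_of_mem h]
    · simp [Set.indicator_of_notMem h]
  have hint0 : ∀ (c : ℝ) (i : ℕ), MeasureTheory.Integrable
      (Set.indicator (Set.Ico ((i : ℝ) * ℓ) (((i : ℝ) + 1) * ℓ)) (fun _ => c))
      volume := by
    intro c i
    rw [MeasureTheory.integrable_indicator_iff measurableSet_Ico]
    exact integrableOn_const measure_Ico_lt_top.ne
  have hint : ∀ (c : ℝ) (i : ℕ), IntervalIntegrable
      (Set.indicator (Set.Ico ((i : ℝ) * ℓ) (((i : ℝ) + 1) * ℓ)) (fun _ => c))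
      volume 0 L := fun c i => (hint0 c i).intervalIntegrable
  set F : ℝ → ℝ := fun z => ∑ i ∈ Finset.range N,
      Set.indicator (Set.Ico ((i : ℝ) * ℓ) (((i : ℝ) + 1) * ℓ))
        (fun _ => y i t - y i s) z with hF
  set Gf : ℝ → ℝ := fun z => ∑ i ∈ Finset.range N,
      Set.indicator (Set.Ico ((i : ℝ) * ℓ) (((i : ℝ) + 1) * ℓ))
        (fun _ => |y i t - y i s|) z with hGf
  have hFint : IntervalIntegrable F volume 0 L :=
    (MeasureTheory.integrable_finset_sum _ (fun i _ => hint0 _ i)).intervalIntegrable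
  have hGint : IntervalIntegrable Gf volume 0 L :=
    (MeasureTheory.integrable_finset_sum _ (fun i _ => hint0 _ i)).intervalIntegrable
  have hFabs : IntervalIntegrable (fun z => |F z|) volume 0 L := hFint.abs
  have hpoint : ∀ z, |F z| ≤ Gf z := by
    intro z
    refine le_trans (Finset.abs_sum_le_sum_abs _ _) ?_
    apply Finset.sum_le_sum
    intro i _
    by_cases h : z ∈ Set.Ico ((i : ℝ) * ℓ) (((i : ℝ) + 1) * ℓ)
    · simp [Set.indicator_of_mem h]
    · simp [Set.indicator_of_notMem h]
  have hintGf : ∫ z in (0:ℝ)..L, Gf z ≤ ∑ i ∈ Finset.range N, ℓ * |y i t - y i s| := by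
    rw [hGf]
    rw [intervalIntegral.integral_finset_sum (fun i _ => hint _ i)]
    apply Finset.sum_le_sum
    intro i hi
    have hiN : i < N := Finset.mem_range.mp hi
    rw [intervalIntegral.integral_of_le hL0.le]
    rw [MeasureTheory.setIntegral_indicator measurableSet_Ico]
    rw [MeasureTheory.setIntegral_const]
    have hvol : (volume (Set.Ioc 0 L ∩ Set.Ico ((i : ℝ) * ℓ) (((i : ℝ) + 1) * ℓ))).toReal ≤ ℓ := by
      have h1 : volume (Set.Ioc 0 L ∩ Set.Ico ((i : ℝ) * ℓ) (((i : ℝ) + 1) * ℓ))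
          ≤ volume (Set.Ico ((i : ℝ) * ℓ) (((i : ℝ) + 1) * ℓ)) :=
        measure_mono Set.inter_subset_right
      rw [Real.volume_Ico] at h1
      have h2 : ((i : ℝ) + 1) * ℓ - (i : ℝ) * ℓ = ℓ := by ring
      rw [h2] at h1
      calc (volume (Set.Ioc 0 L ∩ Set.Ico ((i : ℝ) * ℓ) (((i : ℝ) + 1) * ℓ))).toReal
          ≤ (ENNReal.ofReal ℓ).toReal := ENNReal.toReal_mono ENNReal.ofReal_ne_top h1
        _ = ℓ := ENNReal.toReal_ofReal hℓ.le
    rw [smul_eq_mul]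
    exact mul_le_mul_of_nonneg_right hvol (abs_nonneg _)
  have hfinal : ∫ z in (0:ℝ)..L, |ρcheck t z - ρcheck s z| = ∫ z in (0:ℝ)..L, |F z| := by
    apply intervalIntegral.integral_congr
    intro z _
    simp only
    rw [hdiff z]
  rw [hfinal]
  calc ∫ z in (0:ℝ)..L, |F z|
      ≤ ∫ z in (0:ℝ)..L, Gf z :=
        intervalIntegral.integral_mono_on hL0.le hFabs hGint (fun z _ => hpoint z)
    _ ≤ ∑ i ∈ Finset.range N, ℓ * |y i t - y i s| := hintGf
    _ = ℓ * ∑ i ∈ Finset.range N, |y i t - y i s| := by rw [Finset.mul_sum]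
    _ ≤ ℓ * (K * |t - s|) := by
        apply mul_le_mul_of_nonneg_left key hℓ.le
    _ = R ^ 2 * (C + (v 0 - v R)) * |t - s| := by
        rw [hK]
        field_simp
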